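/- For the 6-dimensional quadratic Lie superalgebra g₆ with even part spanned by X₀, Y₀, odd part spanned by X₁, Y₁, Z₁, T₁, and nonzero brackets [Z₁,T₁] = -X₀, [Y₀,Z₁] = -Y₁, [Y₀,T₁] = -X₁, the second cohomology group H²(g₆, ℂ) with trivial coefficients is 6-dimensional. -/
import Mathlib


/-- A bilinear scalar-valued map, given as a bare function. -/
def IsBilinC {M N : Type*} [AddCommGroup M] [Module ℂ M] [AddCommGroup N] [Module ℂ N]
    (f : M → N → ℂ) : Prop :=
  (∀ (c : ℂ) (x y : M) (z : N), f (c • x + y) z = c * f x z + f y z) ∧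
  (∀ (c : ℂ) (x : M) (y z : N), f x (c • y + z) = c * f x y + f x z)

/-- A linear scalar-valued map, given as a bare function. -/
def IsLinC {M : Type*} [AddCommGroup M] [Module ℂ M] (f : M → ℂ) : Prop :=
  ∀ (c : ℂ) (x y : M), f (c • x + y) = c * f x + f y

/- The elementary quadratic Lie superalgebra `g₆ˢ`: even part `ℂX₀ ⊕ ℂY₀`
(coordinates `(A.1, A.2)`), odd part `ℂX₁ ⊕ ℂY₁ ⊕ ℂZ₁ ⊕ ℂT₁` (coordinates
`U 0, U 1, U 2, U 3`), nonzero brackets `[Z₁,T₁] = -X₀`, `[Y₀,Z₁] = -Y₁`,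
`[Y₀,T₁] = -X₁`. -/

/-- even-even bracket of `g₆` (zero). -/
def br00 : ℂ × ℂ → ℂ × ℂ → ℂ × ℂ := fun _ _ => (0, 0)

/-- even-odd bracket of `g₆`: `[Y₀,Z₁] = -Y₁`, `[Y₀,T₁] = -X₁`. -/
noncomputable def br01 : ℂ × ℂ → (Fin 4 → ℂ) → (Fin 4 → ℂ) :=
  fun A U => ![-(A.2 * U 3), -(A.2 * U 2), 0, 0]

/-- odd-odd bracket of `g₆`: `[Z₁,T₁] = -X₀` (symmetric). -/
def br11 : (Fin 4 → ℂ) → (Fin 4 → ℂ) → ℂ × ℂ :=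
  fun U V => (-(U 2 * V 3) - U 3 * V 2, 0)

/-- A 2-cocycle of `g₆` with trivial coefficients. -/
def IsCocycle2 (w0 : ℂ × ℂ → ℂ × ℂ → ℂ) (wm : ℂ × ℂ → (Fin 4 → ℂ) → ℂ)
    (w1 : (Fin 4 → ℂ) → (Fin 4 → ℂ) → ℂ) : Prop :=
  IsBilinC w0 ∧ IsBilinC wm ∧ IsBilinC w1 ∧
  (∀ A B, w0 A B = - w0 B A) ∧ (∀ U V, w1 U V = w1 V U) ∧
  (∀ A B C, - w0 (br00 A B) C + w0 (br00 A C) B + w0 A (br00 B C) = 0) ∧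
  (∀ A B U, - wm (br00 A B) U - wm B (br01 A U) + wm A (br01 B U) = 0) ∧
  (∀ A U V, - w1 (br01 A U) V - w1 (br01 A V) U + w0 A (br11 U V) = 0) ∧
  (∀ U V W, wm (br11 U V) W + wm (br11 U W) V + wm (br11 V W) U = 0)

/-- A 2-coboundary of `g₆`. -/
def IsCoboundary2 (w0 : ℂ × ℂ → ℂ × ℂ → ℂ) (wm : ℂ × ℂ → (Fin 4 → ℂ) → ℂ)
    (w1 : (Fin 4 → ℂ) → (Fin 4 → ℂ) → ℂ) : Prop :=
  ∃ (f0 : ℂ × ℂ → ℂ) (f1 : (Fin 4 → ℂ) → ℂ), IsLinC f0 ∧ IsLinC f1 ∧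
    (∀ A B, w0 A B = - f0 (br00 A B)) ∧
    (∀ A U, wm A U = - f1 (br01 A U)) ∧
    (∀ U V, w1 U V = - f0 (br11 U V))

/-! Auxiliary material -/

/-- standard basis of `Fin 4 → ℂ` -/
noncomputable def ee : Fin 4 → (Fin 4 → ℂ) := fun i => Pi.single i 1

@[simp] lemma ee_apply (i j : Fin 4) : ee i j = if j = i then 1 else 0 := by
  simp [ee, Pi.single_apply]

/-- even basis vectors -/
noncomputable def Xe : ℂ × ℂ := (1, 0)
noncomputable def Ye : ℂ × ℂ := (0, 1)

@[simp] lemma Xe_fst : Xe.1 = 1 := rfl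
@[simp] lemma Xe_snd : Xe.2 = 0 := rfl
@[simp] lemma Ye_fst : Ye.1 = 0 := rfl
@[simp] lemma Ye_snd : Ye.2 = 1 := rfl

lemma lin_zero {M : Type*} [AddCommGroup M] [Module ℂ M] {f : M → ℂ}
    (h : ∀ (c : ℂ) (x y : M), f (c • x + y) = c * f x + f y) : f 0 = 0 := by
  have h1 := h (-1) 0 0; simpa using h1

lemma expand4 {g : (Fin 4 → ℂ) → ℂ}
    (h : ∀ (c : ℂ) (x y : Fin 4 → ℂ), g (c • x + y) = c * g x + g y) (U : Fin 4 → ℂ) :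
    g U = U 0 * g (ee 0) + U 1 * g (ee 1) + U 2 * g (ee 2) + U 3 * g (ee 3) := by
  have hU : U = U 0 • ee 0 + (U 1 • ee 1 + (U 2 • ee 2 + (U 3 • ee 3 + 0))) := by
    funext j; fin_cases j <;> simp
  rw [hU, h, h, h, h, lin_zero h]
  simp [ee_apply]
  try ring

lemma expand2 {g : ℂ × ℂ → ℂ}
    (h : ∀ (c : ℂ) (x y : ℂ × ℂ), g (c • x + y) = c * g x + g y) (A : ℂ × ℂ) :
    g A = A.1 * g Xe + A.2 * g Ye := by
  have hA : A = A.1 • Xe + (A.2 • Ye + 0) := by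
    ext <;> simp [Xe, Ye]
  rw [hA, h, h, lin_zero h]
  simp [Xe, Ye]
  try ring

/-- The second cohomology group `H²(g₆ˢ, ℂ)` with trivial coefficients is
6-dimensional: there are six cocycles which are linearly independent modulo
coboundaries and span the cocycles modulo coboundaries. -/
theorem second_cohomology_g6_dim_six :
    ∃ (W0 : Fin 6 → ℂ × ℂ → ℂ × ℂ → ℂ) (Wm : Fin 6 → ℂ × ℂ → (Fin 4 → ℂ) → ℂ)
      (W1 : Fin 6 → (Fin 4 → ℂ) → (Fin 4 → ℂ) → ℂ),
      (∀ i, IsCocycle2 (W0 i) (Wm i) (W1 i)) ∧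
      (∀ w0 wm w1, IsCocycle2 w0 wm w1 → ∃ c : Fin 6 → ℂ,
        IsCoboundary2 (fun A B => w0 A B - ∑ i, c i * W0 i A B)
          (fun A U => wm A U - ∑ i, c i * Wm i A U)
          (fun U V => w1 U V - ∑ i, c i * W1 i U V)) ∧
      (∀ c : Fin 6 → ℂ,
        IsCoboundary2 (fun A B => ∑ i, c i * W0 i A B)
          (fun A U => ∑ i, c i * Wm i A U)
          (fun U V => ∑ i, c i * W1 i U V) → c = 0) := by
  refine ⟨(fun i A B => if i = 0 then A.1 * B.2 - A.2 * B.1 else 0),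
    (fun i A U => if i = 4 then A.2 * U 0 else if i = 5 then A.2 * U 1 else 0),
    (fun i U V =>
      if i = 0 then -(U 1 * V 3 + U 3 * V 1) else
      if i = 1 then (U 0 * V 2 + U 2 * V 0) - (U 1 * V 3 + U 3 * V 1) else
      if i = 2 then U 2 * V 2 else
      if i = 3 then U 3 * V 3 else 0), ?_, ?_, ?_⟩
  · -- each W i is a cocycle
    intro i
    refine ⟨⟨?_, ?_⟩, ⟨?_, ?_⟩, ⟨?_, ?_⟩, ?_, ?_, ?_, ?_, ?_, ?_⟩ <;>
    · intros
      simp only [br00, br01, br11, Prod.fst_add, Prod.snd_add, Prod.smul_fst, Prod.smul_snd,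
        Pi.add_apply, Pi.smul_apply, smul_eq_mul, Matrix.cons_val_zero, Matrix.cons_val_one,
        Matrix.head_cons, Matrix.cons_val_two, Matrix.cons_val_three, Matrix.tail_cons]
      split_ifs <;> ring
  · -- spanning
    rintro w0 wm w1 ⟨⟨hb0l, hb0r⟩, ⟨hbml, hbmr⟩, ⟨hb1l, hb1r⟩, hanti, hsym, _h1, h2, h3, h4⟩
    -- zero lemmas
    have hw0L0 : ∀ B, w0 0 B = 0 :=
      fun B => lin_zero (f := fun A => w0 A B) (fun c x y => hb0l c x y B)
    have hw0R0 : ∀ A, w0 A 0 = 0 :=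
      fun A => lin_zero (f := fun B => w0 A B) (fun c x y => hb0r c A x y)
    have hwmL0 : ∀ U, wm 0 U = 0 :=
      fun U => lin_zero (f := fun A => wm A U) (fun c x y => hbml c x y U)
    have hwmR0 : ∀ A, wm A 0 = 0 :=
      fun A => lin_zero (f := fun U => wm A U) (fun c x y => hbmr c A x y)
    have hw1L0 : ∀ V, w1 0 V = 0 :=
      fun V => lin_zero (f := fun U => w1 U V) (fun c x y => hb1l c x y V)
    -- bracket decompositions
    have hbr00 : ∀ A B : ℂ × ℂ, br00 A B = 0 := fun _ _ => rfl
    have hbr01 : ∀ (A : ℂ × ℂ) (U : Fin 4 → ℂ),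
        br01 A U = (-(A.2 * U 3)) • ee 0 + ((-(A.2 * U 2)) • ee 1 + 0) := by
      intro A U; funext j; fin_cases j <;> simp [br01]
    have hbr11 : ∀ U V : Fin 4 → ℂ,
        br11 U V = (-(U 2 * V 3) - U 3 * V 2) • Xe + 0 := by
      intro U V; ext <;> simp [br11, Xe]
    have hw1br : ∀ (A : ℂ × ℂ) (U V : Fin 4 → ℂ),
        w1 (br01 A U) V = -(A.2 * U 3) * w1 (ee 0) V + -(A.2 * U 2) * w1 (ee 1) V := by
      intro A U V
      rw [hbr01, hb1l, hb1l, hw1L0]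
      ring
    have hwmbr : ∀ (A B : ℂ × ℂ) (U : Fin 4 → ℂ),
        wm B (br01 A U) = -(A.2 * U 3) * wm B (ee 0) + -(A.2 * U 2) * wm B (ee 1) := by
      intro A B U
      rw [hbr01, hbmr, hbmr, hwmR0]
      ring
    have hw0br : ∀ (A : ℂ × ℂ) (U V : Fin 4 → ℂ),
        w0 A (br11 U V) = (-(U 2 * V 3) - U 3 * V 2) * w0 A Xe := by
      intro A U V
      rw [hbr11, hb0r, hw0R0]
      ring
    have hwmbr11 : ∀ (U V W : Fin 4 → ℂ),
        wm (br11 U V) W = (-(U 2 * V 3) - U 3 * V 2) * wm Xe W := by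
      intro U V W
      rw [hbr11, hbml, hwmL0]
      ring
    -- expansions
    have hw0EE : ∀ A B, w0 A B = A.1 * B.1 * w0 Xe Xe + A.1 * B.2 * w0 Xe Ye
        + A.2 * B.1 * w0 Ye Xe + A.2 * B.2 * w0 Ye Ye := by
      intro A B
      rw [expand2 (g := fun x => w0 x B) (fun c x y => hb0l c x y B) A,
        expand2 (g := fun y => w0 Xe y) (fun c x y => hb0r c Xe x y) B,
        expand2 (g := fun y => w0 Ye y) (fun c x y => hb0r c Ye x y) B]
      ring
    have hwmEE : ∀ A U, wm A U = A.1 * U 0 * wm Xe (ee 0) + A.1 * U 1 * wm Xe (ee 1)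
        + A.1 * U 2 * wm Xe (ee 2) + A.1 * U 3 * wm Xe (ee 3)
        + A.2 * U 0 * wm Ye (ee 0) + A.2 * U 1 * wm Ye (ee 1)
        + A.2 * U 2 * wm Ye (ee 2) + A.2 * U 3 * wm Ye (ee 3) := by
      intro A U
      rw [expand2 (g := fun x => wm x U) (fun c x y => hbml c x y U) A,
        expand4 (g := fun y => wm Xe y) (fun c x y => hbmr c Xe x y) U,
        expand4 (g := fun y => wm Ye y) (fun c x y => hbmr c Ye x y) U]
      ring
    have hw1EE : ∀ U V, w1 U V =
        U 0 * V 0 * w1 (ee 0) (ee 0) + U 0 * V 1 * w1 (ee 0) (ee 1)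
        + U 0 * V 2 * w1 (ee 0) (ee 2) + U 0 * V 3 * w1 (ee 0) (ee 3)
        + U 1 * V 0 * w1 (ee 1) (ee 0) + U 1 * V 1 * w1 (ee 1) (ee 1)
        + U 1 * V 2 * w1 (ee 1) (ee 2) + U 1 * V 3 * w1 (ee 1) (ee 3)
        + U 2 * V 0 * w1 (ee 2) (ee 0) + U 2 * V 1 * w1 (ee 2) (ee 1)
        + U 2 * V 2 * w1 (ee 2) (ee 2) + U 2 * V 3 * w1 (ee 2) (ee 3)
        + U 3 * V 0 * w1 (ee 3) (ee 0) + U 3 * V 1 * w1 (ee 3) (ee 1)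
        + U 3 * V 2 * w1 (ee 3) (ee 2) + U 3 * V 3 * w1 (ee 3) (ee 3) := by
      intro U V
      rw [expand4 (g := fun x => w1 x V) (fun c x y => hb1l c x y V) U,
        expand4 (g := fun y => w1 (ee 0) y) (fun c x y => hb1r c (ee 0) x y) V,
        expand4 (g := fun y => w1 (ee 1) y) (fun c x y => hb1r c (ee 1) x y) V,
        expand4 (g := fun y => w1 (ee 2) y) (fun c x y => hb1r c (ee 2) x y) V,
        expand4 (g := fun y => w1 (ee 3) y) (fun c x y => hb1r c (ee 3) x y) V]
      ring
    -- scalar facts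
    have FXX : w0 Xe Xe = 0 := by linear_combination (hanti Xe Xe) / 2
    have FYY : w0 Ye Ye = 0 := by linear_combination (hanti Ye Ye) / 2
    have FYX : w0 Ye Xe = - w0 Xe Ye := hanti Ye Xe
    have M0 : wm Xe (ee 0) = 0 := by
      have h := h2 Ye Xe (ee 3)
      rw [hbr00, hwmL0] at h
      simp only [hwmbr] at h
      simp at h
      linear_combination h
    have M1 : wm Xe (ee 1) = 0 := by
      have h := h2 Ye Xe (ee 2)
      rw [hbr00, hwmL0] at h
      simp only [hwmbr] at h
      simp at h
      linear_combination h
    have M2 : wm Xe (ee 2) = 0 := by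
      have h := h4 (ee 2) (ee 3) (ee 2)
      simp only [hwmbr11] at h
      simp at h
      linear_combination h
    have M3 : wm Xe (ee 3) = 0 := by
      have h := h4 (ee 2) (ee 3) (ee 3)
      simp only [hwmbr11] at h
      simp at h
      linear_combination h
    have E00 : w1 (ee 0) (ee 0) = 0 := by
      have h := h3 Ye (ee 0) (ee 3)
      simp only [hw1br, hw0br] at h
      simp at h
      linear_combination h
    have E01 : w1 (ee 0) (ee 1) = 0 := by
      have h := h3 Ye (ee 1) (ee 3)
      simp only [hw1br, hw0br] at h
      simp at h
      linear_combination h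
    have E11 : w1 (ee 1) (ee 1) = 0 := by
      have h := h3 Ye (ee 1) (ee 2)
      simp only [hw1br, hw0br] at h
      simp at h
      linear_combination h
    have E03 : w1 (ee 0) (ee 3) = 0 := by
      have h := h3 Ye (ee 3) (ee 3)
      simp only [hw1br, hw0br] at h
      simp at h
      linear_combination h
    have E12 : w1 (ee 1) (ee 2) = 0 := by
      have h := h3 Ye (ee 2) (ee 2)
      simp only [hw1br, hw0br] at h
      simp at h
      linear_combination h
    have E123 : w1 (ee 1) (ee 3) + w1 (ee 0) (ee 2) - w0 Ye Xe = 0 := by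
      have h := h3 Ye (ee 2) (ee 3)
      simp only [hw1br, hw0br] at h
      simp at h
      linear_combination h
    have S10 := hsym (ee 1) (ee 0)
    have S30 := hsym (ee 3) (ee 0)
    have S21 := hsym (ee 2) (ee 1)
    have S20 := hsym (ee 2) (ee 0)
    have S31 := hsym (ee 3) (ee 1)
    have S32 := hsym (ee 3) (ee 2)
    refine ⟨(fun i => if i = 0 then w0 Xe Ye else if i = 1 then w1 (ee 0) (ee 2)
        else if i = 2 then w1 (ee 2) (ee 2) else if i = 3 then w1 (ee 3) (ee 3)
        else if i = 4 then wm Ye (ee 0) else wm Ye (ee 1)),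
      (fun A => A.1 * w1 (ee 2) (ee 3)),
      (fun U => U 0 * wm Ye (ee 3) + U 1 * wm Ye (ee 2)), ?_, ?_, ?_, ?_, ?_⟩
    · intro c x y; simp; ring
    · intro c x y; simp; ring
    · intro A B
      simp only [br00, Fin.sum_univ_six]
      simp
      rw [hw0EE A B]
      linear_combination A.1 * B.1 * FXX + A.2 * B.2 * FYY + A.2 * B.1 * FYX
    · intro A U
      simp only [br01, Fin.sum_univ_six, Matrix.cons_val_zero, Matrix.cons_val_one,
        Matrix.head_cons]
      simp
      rw [hwmEE A U]
      linear_combination (A.1 * U 0) * M0 + (A.1 * U 1) * M1 + (A.1 * U 2) * M2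
        + (A.1 * U 3) * M3
    · intro U V
      simp only [br11, Fin.sum_univ_six]
      simp
      rw [hw1EE U V]
      linear_combination (U 0 * V 0) * E00 + (U 0 * V 1 + U 1 * V 0) * E01
        + (U 1 * V 0) * S10 + (U 1 * V 1) * E11 + (U 0 * V 3 + U 3 * V 0) * E03
        + (U 3 * V 0) * S30 + (U 1 * V 2 + U 2 * V 1) * E12 + (U 2 * V 1) * S21
        + (U 2 * V 0) * S20 + (U 3 * V 1) * S31 + (U 3 * V 2) * S32
        + (U 1 * V 3 + U 3 * V 1) * (E123 + FYX)
  · -- independence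
    rintro c ⟨f0, f1, hf0, hf1, hc0, hcm, hc1⟩
    have hf0z : f0 0 = 0 := lin_zero hf0
    have hf1z : f1 0 = 0 := lin_zero hf1
    have hbz : ∀ U V : Fin 4 → ℂ, U 2 * V 3 = 0 → U 3 * V 2 = 0 → f0 (br11 U V) = 0 := by
      intro U V h1 h2
      have : br11 U V = 0 := by
        simp [br11, h1, h2]
      rw [this, hf0z]
    have e0 := hc0 (1, 0) (0, 1)
    have e1 := hc1 (ee 0) (ee 2)
    have e2 := hc1 (ee 2) (ee 2)
    have e3 := hc1 (ee 3) (ee 3)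
    have e4 := hcm (0, 1) (ee 0)
    have e5 := hcm (0, 1) (ee 1)
    rw [show br00 ((1:ℂ), (0:ℂ)) ((0:ℂ), (1:ℂ)) = 0 from rfl, hf0z] at e0
    rw [hbz (ee 0) (ee 2) (by simp) (by simp)] at e1
    rw [hbz (ee 2) (ee 2) (by simp) (by simp)] at e2
    rw [hbz (ee 3) (ee 3) (by simp) (by simp)] at e3
    rw [show br01 ((0:ℂ), (1:ℂ)) (ee 0) = 0 by funext j; fin_cases j <;> simp [br01], hf1z] at e4
    rw [show br01 ((0:ℂ), (1:ℂ)) (ee 1) = 0 by funext j; fin_cases j <;> simp [br01], hf1z] at e5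
    simp only [Fin.sum_univ_six, ee_apply] at e0 e1 e2 e3 e4 e5
    simp at e0 e1 e2 e3 e4 e5
    funext i
    fin_cases i <;> simp [e0, e1, e2, e3, e4, e5]
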